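/- For any discrete memoryless multiple access channel and any δ ≥ 0, the supremum in the definition of σ₁(δ) may be restricted to sets 𝒰 with |𝒰| ≤ 2 without changing its value; that is, σ₁(δ) = sup over finite 𝒰 with |𝒰| ≤ 2 of max_{p∈𝒫⁽¹⁾_𝒰(δ)} I(X₁,X₂;Y|U). -/

import Mathlib

open scoped BigOperators

noncomputable section

/-- Shannon entropy (base 2) of a (sub)probability mass function on a finite type. -/
def ent2 {α : Type} [Fintype α] (p : α → ℝ) : ℝ :=
  -∑ a, p a * Real.logb 2 (p a)

/-- Conditional mutual information `I(A;B|U)` (in bits) of the joint pmf `p` on `U × A × B`,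
given in curried form, computed as `H(A|U) + H(B|U) - H(A,B|U)`. -/
def condMI {U A B : Type} [Fintype U] [Fintype A] [Fintype B]
    (p : U → A → B → ℝ) : ℝ :=
  ent2 (fun ua : U × A => ∑ b, p ua.1 ua.2 b)
    + ent2 (fun ub : U × B => ∑ a, p ub.1 a ub.2)
    - ent2 (fun uab : U × A × B => p uab.1 uab.2.1 uab.2.2)
    - ent2 (fun u : U => ∑ a, ∑ b, p u a b)

/-- `p` is a joint pmf on `U × A × B` (curried form). -/
def IsPMF3 {U A B : Type} [Fintype U] [Fintype A] [Fintype B] (p : U → A → B → ℝ) : Prop :=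
  (∀ u a b, 0 ≤ p u a b) ∧ ∑ u, ∑ a, ∑ b, p u a b = 1

/-- A discrete memoryless multiple access channel with input alphabets `X1, X2` and
output alphabet `Y`. -/
structure MAC (X1 X2 Y : Type) [Fintype X1] [Fintype X2] [Fintype Y] where
  W : X1 → X2 → Y → ℝ
  nonneg : ∀ x1 x2 y, 0 ≤ W x1 x2 y
  sum_one : ∀ x1 x2, ∑ y, W x1 x2 y = 1

variable {X1 X2 Y : Type} [Fintype X1] [Fintype X2] [Fintype Y]

/-- The set of values `(1/n) I(X₁ⁿ,X₂ⁿ;Yⁿ|U)` over all finite auxiliary alphabets `U`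
(wlog `U = Fin k`) and all joint pmfs `p(u,x₁ⁿ,x₂ⁿ)` with `I(X₁ⁿ;X₂ⁿ|U) ≤ nδ`,
where `Yⁿ` is the output of the `n`-th extension of the MAC `M`. -/
def sigmaSet (M : MAC X1 X2 Y) (n : ℕ) (δ : ℝ) : Set ℝ :=
  {r | ∃ (k : ℕ) (p : Fin k → (Fin n → X1) → (Fin n → X2) → ℝ),
    IsPMF3 p ∧ condMI p ≤ (n : ℝ) * δ ∧
    r = (1 / (n : ℝ)) *
      condMI (fun (u : Fin k) (x : (Fin n → X1) × (Fin n → X2)) (y : Fin n → Y) =>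
        p u x.1 x.2 * ∏ t, M.W (x.1 t) (x.2 t) (y t)) }

/-- `σ_n(δ)`. -/
def sigmaN (M : MAC X1 X2 Y) (n : ℕ) (δ : ℝ) : ℝ := sSup (sigmaSet M n δ)

/-- `σ(δ) = lim_n σ_n(δ) = sup_n σ_n(δ)`. -/
def sigmaF (M : MAC X1 X2 Y) (δ : ℝ) : ℝ := ⨆ n : ℕ, sigmaN M (n + 1) δ

/-- `⌊2^{nR}⌋`, the size of a message (or link) index set. -/
def msgSize (n : ℕ) (R : ℝ) : ℕ := ⌊(2 : ℝ) ^ ((n : ℝ) * R)⌋₊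

/-- A `(2^{nR₁}, 2^{nR₂}, n)`-code for the MAC `M` with a
`((c1,c2),(d1,d2))`-cooperation facilitator. -/
structure Code (M : MAC X1 X2 Y) (n : ℕ) (R1 R2 c1 c2 d1 d2 : ℝ) where
  /-- encoder 1 to CF -/
  toCF1 : Fin (msgSize n R1) → Fin (msgSize n c1)
  /-- encoder 2 to CF -/
  toCF2 : Fin (msgSize n R2) → Fin (msgSize n c2)
  /-- CF to encoder 1 -/
  cf1 : Fin (msgSize n c1) → Fin (msgSize n c2) → Fin (msgSize n d1)
  /-- CF to encoder 2 -/
  cf2 : Fin (msgSize n c1) → Fin (msgSize n c2) → Fin (msgSize n d2)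
  /-- encoder 1 -/
  f1 : Fin (msgSize n R1) → Fin (msgSize n d1) → Fin n → X1
  /-- encoder 2 -/
  f2 : Fin (msgSize n R2) → Fin (msgSize n d2) → Fin n → X2
  /-- decoder -/
  dec : (Fin n → Y) → Fin (msgSize n R1) × Fin (msgSize n R2)

/-- The error probability `λ_n(w₁,w₂)` of the code `C` on the message pair `(w₁,w₂)`. -/
def errProb {M : MAC X1 X2 Y} {n : ℕ} {R1 R2 c1 c2 d1 d2 : ℝ}
    (C : Code M n R1 R2 c1 c2 d1 d2)
    (w1 : Fin (msgSize n R1)) (w2 : Fin (msgSize n R2)) : ℝ :=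
  ∑ y : Fin n → Y,
    if C.dec y ≠ (w1, w2) then
      ∏ t, M.W (C.f1 w1 (C.cf1 (C.toCF1 w1) (C.toCF2 w2)) t)
               (C.f2 w2 (C.cf2 (C.toCF1 w1) (C.toCF2 w2)) t) (y t)
    else 0

/-- Average error probability of a code. -/
def avgErr {M : MAC X1 X2 Y} {n : ℕ} {R1 R2 c1 c2 d1 d2 : ℝ}
    (C : Code M n R1 R2 c1 c2 d1 d2) : ℝ :=
  (1 / (2 : ℝ) ^ ((n : ℝ) * (R1 + R2))) * ∑ w1, ∑ w2, errProb C w1 w2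

/-- Maximal error probability of a code. -/
def maxErr {M : MAC X1 X2 Y} {n : ℕ} {R1 R2 c1 c2 d1 d2 : ℝ}
    (C : Code M n R1 R2 c1 c2 d1 d2) : ℝ :=
  sSup {e | ∃ w1 w2, e = errProb C w1 w2}

/-- `(R₁,R₂)` is achievable under the average-error criterion for the MAC `M` with a
`((c1,c2),(d1,d2))`-CF. -/
def AchievableAvg (M : MAC X1 X2 Y) (c1 c2 d1 d2 : ℝ) (R : ℝ × ℝ) : Prop :=
  0 ≤ R.1 ∧ 0 ≤ R.2 ∧
  ∃ C : (n : ℕ) → Code M (n + 1) R.1 R.2 c1 c2 d1 d2,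
    Filter.Tendsto (fun n => avgErr (C n)) Filter.atTop (nhds 0)

/-- `(R₁,R₂)` is achievable under the maximal-error criterion. -/
def AchievableMax (M : MAC X1 X2 Y) (c1 c2 d1 d2 : ℝ) (R : ℝ × ℝ) : Prop :=
  0 ≤ R.1 ∧ 0 ≤ R.2 ∧
  ∃ C : (n : ℕ) → Code M (n + 1) R.1 R.2 c1 c2 d1 d2,
    Filter.Tendsto (fun n => maxErr (C n)) Filter.atTop (nhds 0)

/-- Average-error sum-capacity `C_sum,avg(C_in, C_out)`. -/
def CsumAvg (M : MAC X1 X2 Y) (Cin Cout : ℝ × ℝ) : ℝ :=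
  sSup {s | ∃ R ∈ closure {R : ℝ × ℝ | AchievableAvg M Cin.1 Cin.2 Cout.1 Cout.2 R},
    s = R.1 + R.2}

/-- Maximal-error sum-capacity `C_sum,max(C_in, C_out)`. -/
def CsumMax (M : MAC X1 X2 Y) (Cin Cout : ℝ × ℝ) : ℝ :=
  sSup {s | ∃ R ∈ closure {R : ℝ × ℝ | AchievableMax M Cin.1 Cin.2 Cout.1 Cout.2 R},
    s = R.1 + R.2}

/-- `max_{p(x₁,x₂)} I(X₁,X₂;Y)`, used to specify when CF input links are large enough
that the CF has full knowledge of both messages. -/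
def maxMI (M : MAC X1 X2 Y) : ℝ :=
  sSup {r | ∃ p : X1 × X2 → ℝ, (∀ x, 0 ≤ p x) ∧ (∑ x, p x = 1) ∧
    r = condMI (fun (_ : Unit) (x : X1 × X2) (y : Y) => p x * M.W x.1 x.2 y)}

end


section AuxProofs

lemma mul_logb_mul (x y : ℝ) (hx : 0 ≤ x) (hy : 0 ≤ y) :
    (x*y) * Real.logb 2 (x*y) = y * (x * Real.logb 2 x) + x * (y * Real.logb 2 y) := by
  rcases hx.eq_or_lt with h|h
  · simp [← h]
  rcases hy.eq_or_lt with h'|h'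
  · simp [← h']
  simp only [Real.logb, Real.log_mul h.ne' h'.ne']
  ring

lemma ent2_mix {U V : Type} [Fintype U] [Fintype V] (q : U → ℝ) (s : U → V → ℝ)
    (hq : ∀ u, 0 ≤ q u) (hs0 : ∀ u v, 0 ≤ s u v) (hs1 : ∀ u, ∑ v, s u v = 1) :
    ent2 (fun uv : U × V => q uv.1 * s uv.1 uv.2) = ent2 q + ∑ u, q u * ent2 (s u) := by
  unfold ent2
  rw [Fintype.sum_prod_type]
  have key : ∀ u ∈ Finset.univ (α := U), ∑ v, (q u * s u v) * Real.logb 2 (q u * s u v)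
      = q u * Real.logb 2 (q u) + q u * ∑ v, s u v * Real.logb 2 (s u v) := by
    intro u _
    have h : ∀ v ∈ Finset.univ (α := V), (q u * s u v) * Real.logb 2 (q u * s u v)
        = s u v * (q u * Real.logb 2 (q u)) + q u * (s u v * Real.logb 2 (s u v)) :=
      fun v _ => mul_logb_mul _ _ (hq u) (hs0 u v)
    rw [Finset.sum_congr rfl h, Finset.sum_add_distrib, ← Finset.sum_mul, ← Finset.mul_sum, hs1]
    ring
  rw [Finset.sum_congr rfl key, Finset.sum_add_distrib]
  simp [Finset.mul_sum, mul_neg, Finset.sum_neg_distrib]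
  ring

lemma ent2_nonneg {V : Type} [Fintype V] (p : V → ℝ) (h0 : ∀ v, 0 ≤ p v)
    (h1 : ∑ v, p v = 1) : 0 ≤ ent2 p := by
  unfold ent2
  rw [neg_nonneg]
  apply Finset.sum_nonpos
  intro v _
  have hle : p v ≤ 1 := by
    have := Finset.single_le_sum (f := p) (fun i _ => h0 i) (Finset.mem_univ v)
    linarith [h1 ▸ this]
  rcases (h0 v).eq_or_lt with h|h
  · simp [← h]
  · exact mul_nonpos_of_nonneg_of_nonpos (h0 v) (Real.logb_nonpos one_lt_two (h0 v) hle)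

lemma ent2_le_card {V : Type} [Fintype V] (p : V → ℝ) (h0 : ∀ v, 0 ≤ p v)
    (h1 : ∑ v, p v = 1) : ent2 p ≤ Real.logb 2 (Fintype.card V) := by
  have hne : Nonempty V := by
    rcases isEmpty_or_nonempty V with h|h
    · rw [Finset.univ_eq_empty, Finset.sum_empty] at h1; norm_num at h1
    · exact h
  have hn : (0:ℝ) < (Fintype.card V : ℝ) := by
    exact_mod_cast Fintype.card_pos
  set n : ℝ := (Fintype.card V : ℝ) with hn_def
  have key : 0 ≤ ∑ v, p v * Real.log (n * p v) := by
    have hpt : ∀ v, p v - 1/n ≤ p v * Real.log (n * p v) := by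
      intro v
      rcases (h0 v).eq_or_lt with h|h
      · rw [← h]; simp; positivity
      · have hnp : 0 < n * p v := by positivity
        have hlog := Real.log_le_sub_one_of_pos (inv_pos.mpr hnp)
        rw [Real.log_inv] at hlog
        have h2 : 1 - (n * p v)⁻¹ ≤ Real.log (n * p v) := by linarith
        have h3 : p v * (1 - (n * p v)⁻¹) ≤ p v * Real.log (n * p v) :=
          mul_le_mul_of_nonneg_left h2 h.le
        have h4 : p v * (1 - (n * p v)⁻¹) = p v - 1/n := by
          field_simp
        linarith [h4 ▸ h3]
    calc (0:ℝ) = ∑ v, (p v - 1/n) := by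
          rw [Finset.sum_sub_distrib, h1, Finset.sum_const, Finset.card_univ,
            nsmul_eq_mul]
          field_simp
          rw [hn_def]; ring
      _ ≤ _ := Finset.sum_le_sum (fun v _ => hpt v)
  have hlog2 : 0 < Real.log 2 := Real.log_pos one_lt_two
  have hsplit : ∑ v, p v * Real.log (n * p v)
      = Real.log n + ∑ v, p v * Real.log (p v) := by
    have hpt : ∀ v, p v * Real.log (n * p v) = p v * Real.log n + p v * Real.log (p v) := by
      intro v
      rcases (h0 v).eq_or_lt with h|h
      · rw [← h]; ring
      · rw [Real.log_mul hn.ne' h.ne']; ring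
    rw [Finset.sum_congr rfl (fun v _ => hpt v), Finset.sum_add_distrib,
      ← Finset.sum_mul, h1, one_mul]
  rw [hsplit] at key
  unfold ent2
  rw [Real.logb]
  have hent : -∑ v, p v * Real.logb 2 (p v) = (-∑ v, p v * Real.log (p v)) / Real.log 2 := by
    rw [neg_div, Finset.sum_div]
    congr 1
    exact Finset.sum_congr rfl (fun v _ => by rw [Real.logb, mul_div_assoc])
  rw [hent, div_le_div_iff₀ hlog2 hlog2]
  nlinarith

lemma tri_core (a1 a2 b1 b2 c1 c2 α β γ m1 m2 : ℝ)
    (hα : 0 ≤ α) (hβ : 0 ≤ β) (hγ : 0 ≤ γ) (hsum : α + β + γ = 1)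
    (hm1 : m1 = α*a1+β*b1+γ*c1) (hm2 : m2 = α*a2+β*b2+γ*c2)
    (hb : b1 ≤ m1) (hc : c1 ≤ m1) (ha : m1 < a1) :
    ∃ t, 0 ≤ t ∧ t ≤ 1 ∧
      ((t*a1+(1-t)*b1 = m1 ∧ m2 ≤ t*a2+(1-t)*b2) ∨
       (t*a1+(1-t)*c1 = m1 ∧ m2 ≤ t*a2+(1-t)*c2)) := by
  have hab : 0 < a1 - b1 := by linarith
  have hac : 0 < a1 - c1 := by linarith
  have ham : 0 < a1 - m1 := by linarith
  have hrel : a1 - m1 = β*(a1-b1) + γ*(a1-c1) := by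
    linear_combination -hm1 - a1*hsum
  set t1 : ℝ := (m1 - b1)/(a1 - b1) with ht1
  set t2 : ℝ := (m1 - c1)/(a1 - c1) with ht2
  have ht10 : 0 ≤ t1 := div_nonneg (by linarith) hab.le
  have ht11 : t1 ≤ 1 := by rw [ht1, div_le_one hab]; linarith
  have ht20 : 0 ≤ t2 := div_nonneg (by linarith) hac.le
  have ht21 : t2 ≤ 1 := by rw [ht2, div_le_one hac]; linarith
  have heq1 : t1*a1+(1-t1)*b1 = m1 := by rw [ht1]; field_simp; ring
  have heq2 : t2*a1+(1-t2)*c1 = m1 := by rw [ht2]; field_simp; ring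
  have h1t1 : 1 - t1 = (a1-m1)/(a1-b1) := by rw [ht1]; field_simp; ring
  have h1t2 : 1 - t2 = (a1-m1)/(a1-c1) := by rw [ht2]; field_simp; ring
  set μ : ℝ := β*(a1-b1)/(a1-m1) with hμ
  have hμ0 : 0 ≤ μ := by positivity
  have hμ1 : 1 - μ = γ*(a1-c1)/(a1-m1) := by
    rw [hμ, eq_div_iff ham.ne', sub_mul, div_mul_eq_mul_div, mul_comm,
      mul_div_assoc, div_self ham.ne', mul_one]
    linarith [hrel]
  have hμle : μ ≤ 1 := by
    have h : 0 ≤ 1 - μ := by rw [hμ1]; positivity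
    linarith
  have hB : μ*(1-t1) = β := by rw [hμ, h1t1]; field_simp
  have hC : (1-μ)*(1-t2) = γ := by rw [hμ1, h1t2]; field_simp
  have hA : μ*t1 + (1-μ)*t2 = α := by linear_combination -hB - hC - hsum
  have keyid : μ*(t1*a2+(1-t1)*b2) + (1-μ)*(t2*a2+(1-t2)*c2) = m2 := by
    linear_combination a2*hA + b2*hB + c2*hC - hm2
  by_cases hY : m2 ≤ t1*a2+(1-t1)*b2
  · exact ⟨t1, ht10, ht11, Or.inl ⟨heq1, hY⟩⟩
  · push_neg at hY
    refine ⟨t2, ht20, ht21, Or.inr ⟨heq2, ?_⟩⟩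
    by_contra hY2
    push_neg at hY2
    have e1 : 0 ≤ μ*(m2 - (t1*a2+(1-t1)*b2)) := mul_nonneg hμ0 (by linarith)
    have e2 : 0 ≤ (1-μ)*(m2 - (t2*a2+(1-t2)*c2)) := mul_nonneg (by linarith) (by linarith)
    have e3 : μ*(m2 - (t1*a2+(1-t1)*b2)) + (1-μ)*(m2 - (t2*a2+(1-t2)*c2)) = 0 := by
      linear_combination -keyid
    have h4 : (1-μ)*(m2 - (t2*a2+(1-t2)*c2)) = 0 := by linarith
    rcases mul_eq_zero.mp h4 with h5|h5
    · have hμ1' : μ = 1 := by linarith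
      have h6 : μ*(m2 - (t1*a2+(1-t1)*b2)) = 0 := by linarith
      rw [hμ1', one_mul] at h6
      linarith
    · linarith

lemma tri_aux (a1 a2 b1 b2 c1 c2 α β γ m1 m2 : ℝ)
    (hα : 0 ≤ α) (hβ : 0 ≤ β) (hγ : 0 ≤ γ) (hsum : α + β + γ = 1)
    (hm1 : m1 = α*a1+β*b1+γ*c1) (hm2 : m2 = α*a2+β*b2+γ*c2)
    (hb2 : b2 ≤ a2) (hc2 : c2 ≤ a2) :
    ∃ t, 0 ≤ t ∧ t ≤ 1 ∧
      ((t*a1+(1-t)*b1 ≤ m1 ∧ m2 ≤ t*a2+(1-t)*b2) ∨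
       (t*a1+(1-t)*c1 ≤ m1 ∧ m2 ≤ t*a2+(1-t)*c2) ∨
       (t*b1+(1-t)*c1 ≤ m1 ∧ m2 ≤ t*b2+(1-t)*c2)) := by
  by_cases ha : a1 ≤ m1
  · refine ⟨1, by norm_num, by norm_num, Or.inl ⟨?_, ?_⟩⟩
    · ring_nf; linarith
    · have h1 : β*b2 ≤ β*a2 := mul_le_mul_of_nonneg_left hb2 hβ
      have h2 : γ*c2 ≤ γ*a2 := mul_le_mul_of_nonneg_left hc2 hγ
      have h4 : α*a2+β*a2+γ*a2 = a2 := by linear_combination a2*hsum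
      have h3 : m2 ≤ a2 := by linarith
      ring_nf; linarith
  push_neg at ha
  by_cases hb : b1 ≤ m1 <;> by_cases hc : c1 ≤ m1
  · -- b, c left of m1
    obtain ⟨t, h0, h1, hcase⟩ := tri_core a1 a2 b1 b2 c1 c2 α β γ m1 m2 hα hβ hγ hsum hm1 hm2 hb hc ha
    rcases hcase with ⟨e, hy⟩|⟨e, hy⟩
    · exact ⟨t, h0, h1, Or.inl ⟨le_of_eq e, hy⟩⟩
    · exact ⟨t, h0, h1, Or.inr (Or.inl ⟨le_of_eq e, hy⟩)⟩
  · -- b left, c strictly right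
    push_neg at hc
    by_cases hbe : b1 = m1
    · have h1 : α*(a1-m1)+γ*(c1-m1) = 0 := by
        linear_combination -hm1 - β*hbe - m1*hsum
      have e1 : 0 ≤ α*(a1-m1) := mul_nonneg hα (by linarith)
      have e2 : 0 ≤ γ*(c1-m1) := mul_nonneg hγ (by linarith)
      have hα0 : α = 0 := by
        rcases mul_eq_zero.mp (show α*(a1-m1) = 0 by linarith) with h|h
        · exact h
        · linarith
      have hγ0 : γ = 0 := by
        rcases mul_eq_zero.mp (show γ*(c1-m1) = 0 by linarith) with h|h
        · exact h
        · linarith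
      refine ⟨1, by norm_num, by norm_num, Or.inr (Or.inr ⟨?_, ?_⟩)⟩
      · ring_nf; linarith
      · have : m2 = b2 := by rw [hm2, hα0, hγ0]; have : β = 1 := by linarith
                             rw [this]; ring
        ring_nf; linarith
    · have hbe' : b1 < m1 := lt_of_le_of_ne hb hbe
      obtain ⟨t, h0, h1, hcase⟩ := tri_core (-b1) b2 (-a1) a2 (-c1) c2 β α γ (-m1) m2
        hβ hα hγ (by linarith) (by linarith) (by linarith) (by linarith) (by linarith) (by linarith)
      rcases hcase with ⟨e, hy⟩|⟨e, hy⟩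
      · refine ⟨1-t, by linarith, by linarith, Or.inl ⟨?_, ?_⟩⟩
        · ring_nf; ring_nf at e; linarith
        · ring_nf; ring_nf at hy; linarith
      · refine ⟨t, h0, h1, Or.inr (Or.inr ⟨?_, ?_⟩)⟩
        · ring_nf; ring_nf at e; linarith
        · exact hy
  · -- c left, b strictly right
    push_neg at hb
    by_cases hce : c1 = m1
    · have h1 : α*(a1-m1)+β*(b1-m1) = 0 := by
        linear_combination -hm1 - γ*hce - m1*hsum
      have e1 : 0 ≤ α*(a1-m1) := mul_nonneg hα (by linarith)
      have e2 : 0 ≤ β*(b1-m1) := mul_nonneg hβ (by linarith)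
      have hα0 : α = 0 := by
        rcases mul_eq_zero.mp (show α*(a1-m1) = 0 by linarith) with h|h
        · exact h
        · linarith
      have hβ0 : β = 0 := by
        rcases mul_eq_zero.mp (show β*(b1-m1) = 0 by linarith) with h|h
        · exact h
        · linarith
      refine ⟨0, by norm_num, by norm_num, Or.inr (Or.inr ⟨?_, ?_⟩)⟩
      · ring_nf; linarith
      · have : m2 = c2 := by rw [hm2, hα0, hβ0]; have : γ = 1 := by linarith
                             rw [this]; ring
        ring_nf; linarith
    · have hce' : c1 < m1 := lt_of_le_of_ne hc hce
      obtain ⟨t, h0, h1, hcase⟩ := tri_core (-c1) c2 (-a1) a2 (-b1) b2 γ α β (-m1) m2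
        hγ hα hβ (by linarith) (by linarith) (by linarith) (by linarith) (by linarith) (by linarith)
      rcases hcase with ⟨e, hy⟩|⟨e, hy⟩
      · refine ⟨1-t, by linarith, by linarith, Or.inr (Or.inl ⟨?_, ?_⟩)⟩
        · ring_nf; ring_nf at e; linarith
        · ring_nf; ring_nf at hy; linarith
      · refine ⟨1-t, by linarith, by linarith, Or.inr (Or.inr ⟨?_, ?_⟩)⟩
        · ring_nf; ring_nf at e; linarith
        · ring_nf; ring_nf at hy; linarith
  · -- all strictly right: impossible
    push_neg at hb hc
    exfalso
    have h1 : α*(a1-m1)+β*(b1-m1)+γ*(c1-m1) = 0 := by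
      linear_combination -hm1 - m1*hsum
    have e1 : 0 ≤ α*(a1-m1) := mul_nonneg hα (by linarith)
    have e2 : 0 ≤ β*(b1-m1) := mul_nonneg hβ (by linarith)
    have e3 : 0 ≤ γ*(c1-m1) := mul_nonneg hγ (by linarith)
    have hα0 : α = 0 := by
      rcases mul_eq_zero.mp (show α*(a1-m1) = 0 by linarith) with h|h
      · exact h
      · linarith
    have hβ0 : β = 0 := by
      rcases mul_eq_zero.mp (show β*(b1-m1) = 0 by linarith) with h|h
      · exact h
      · linarith
    have hγ0 : γ = 0 := by
      rcases mul_eq_zero.mp (show γ*(c1-m1) = 0 by linarith) with h|h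
      · exact h
      · linarith
    linarith

lemma tri (a1 a2 b1 b2 c1 c2 α β γ m1 m2 : ℝ)
    (hα : 0 ≤ α) (hβ : 0 ≤ β) (hγ : 0 ≤ γ) (hsum : α + β + γ = 1)
    (hm1 : m1 = α*a1+β*b1+γ*c1) (hm2 : m2 = α*a2+β*b2+γ*c2) :
    ∃ t, 0 ≤ t ∧ t ≤ 1 ∧
      ((t*a1+(1-t)*b1 ≤ m1 ∧ m2 ≤ t*a2+(1-t)*b2) ∨
       (t*a1+(1-t)*c1 ≤ m1 ∧ m2 ≤ t*a2+(1-t)*c2) ∨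
       (t*b1+(1-t)*c1 ≤ m1 ∧ m2 ≤ t*b2+(1-t)*c2)) := by
  rcases le_total b2 a2 with hab|hab
  · rcases le_total c2 a2 with hac|hac
    · exact tri_aux a1 a2 b1 b2 c1 c2 α β γ m1 m2 hα hβ hγ hsum hm1 hm2 hab hac
    · -- c2 is max (b2 ≤ a2 ≤ c2)
      obtain ⟨t, h0, h1, hcase⟩ := tri_aux c1 c2 b1 b2 a1 a2 γ β α m1 m2 hγ hβ hα
        (by linarith) (by linarith) (by linarith) (by linarith) (by linarith)
      rcases hcase with ⟨e, hy⟩|⟨e, hy⟩|⟨e, hy⟩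
      · refine ⟨1-t, by linarith, by linarith, Or.inr (Or.inr ⟨?_, ?_⟩)⟩
        · ring_nf; ring_nf at e; linarith
        · ring_nf; ring_nf at hy; linarith
      · refine ⟨1-t, by linarith, by linarith, Or.inr (Or.inl ⟨?_, ?_⟩)⟩
        · ring_nf; ring_nf at e; linarith
        · ring_nf; ring_nf at hy; linarith
      · refine ⟨1-t, by linarith, by linarith, Or.inl ⟨?_, ?_⟩⟩
        · ring_nf; ring_nf at e; linarith
        · ring_nf; ring_nf at hy; linarith
  · rcases le_total c2 b2 with hbc|hbc
    · -- b2 is max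
      obtain ⟨t, h0, h1, hcase⟩ := tri_aux b1 b2 a1 a2 c1 c2 β α γ m1 m2 hβ hα hγ
        (by linarith) (by linarith) (by linarith) (by linarith) (by linarith)
      rcases hcase with ⟨e, hy⟩|⟨e, hy⟩|⟨e, hy⟩
      · refine ⟨1-t, by linarith, by linarith, Or.inl ⟨?_, ?_⟩⟩
        · ring_nf; ring_nf at e; linarith
        · ring_nf; ring_nf at hy; linarith
      · refine ⟨t, h0, h1, Or.inr (Or.inr ⟨?_, ?_⟩)⟩
        · exact e
        · exact hy
      · refine ⟨t, h0, h1, Or.inr (Or.inl ⟨?_, ?_⟩)⟩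
        · exact e
        · exact hy
    · -- c2 is max (a2 ≤ b2, c2 ≥ b2)
      obtain ⟨t, h0, h1, hcase⟩ := tri_aux c1 c2 b1 b2 a1 a2 γ β α m1 m2 hγ hβ hα
        (by linarith) (by linarith) (by linarith) (by linarith) (by linarith)
      rcases hcase with ⟨e, hy⟩|⟨e, hy⟩|⟨e, hy⟩
      · refine ⟨1-t, by linarith, by linarith, Or.inr (Or.inr ⟨?_, ?_⟩)⟩
        · ring_nf; ring_nf at e; linarith
        · ring_nf; ring_nf at hy; linarith
      · refine ⟨1-t, by linarith, by linarith, Or.inr (Or.inl ⟨?_, ?_⟩)⟩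
        · ring_nf; ring_nf at e; linarith
        · ring_nf; ring_nf at hy; linarith
      · refine ⟨1-t, by linarith, by linarith, Or.inl ⟨?_, ?_⟩⟩
        · ring_nf; ring_nf at e; linarith
        · ring_nf; ring_nf at hy; linarith

section K
variable {ι : Type} [DecidableEq ι]

lemma sum_three_erase (f : ι → ℝ) (S : Finset ι) (u v w : ι)
    (hu : u ∈ S) (hv : v ∈ S) (hw : w ∈ S)
    (huv : u ≠ v) (huw : u ≠ w) (hvw : v ≠ w) :
    ∑ x ∈ S, f x = f u + f v + f w + ∑ x ∈ (((S.erase w).erase u).erase v), f x := by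
  have hu' : u ∈ S.erase w := Finset.mem_erase.mpr ⟨huw, hu⟩
  have hv' : v ∈ (S.erase w).erase u := Finset.mem_erase.mpr ⟨huv.symm, Finset.mem_erase.mpr ⟨hvw, hv⟩⟩
  rw [← Finset.sum_erase_add S f hw, ← Finset.sum_erase_add _ f hu', ← Finset.sum_erase_add _ f hv']
  ring

lemma sum_two_erase (f : ι → ℝ) (S : Finset ι) (u v w : ι)
    (hu : u ∈ S) (hv : v ∈ S)
    (huv : u ≠ v) (huw : u ≠ w) (hvw : v ≠ w) :
    ∑ x ∈ S.erase w, f x = f u + f v + ∑ x ∈ (((S.erase w).erase u).erase v), f x := by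
  have hu' : u ∈ S.erase w := Finset.mem_erase.mpr ⟨huw, hu⟩
  have hv' : v ∈ (S.erase w).erase u := Finset.mem_erase.mpr ⟨huv.symm, Finset.mem_erase.mpr ⟨hvw, hv⟩⟩
  rw [← Finset.sum_erase_add _ f hu', ← Finset.sum_erase_add _ f hv']
  ring

lemma step_reduce (z1 z2 q : ι → ℝ) (S : Finset ι)
    (hq : ∀ i, 0 ≤ q i) (hsum : ∑ i ∈ S, q i = 1)
    (u v w : ι) (hu : u ∈ S) (hv : v ∈ S) (hw : w ∈ S)
    (huv : u ≠ v) (huw : u ≠ w) (hvw : v ≠ w)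
    (t' : ℝ) (ht0 : 0 ≤ t') (ht1 : t' ≤ 1)
    (h1 : (q u + q v + q w) * (t' * z1 u + (1-t') * z1 v)
            ≤ q u * z1 u + q v * z1 v + q w * z1 w)
    (h2 : q u * z2 u + q v * z2 v + q w * z2 w
            ≤ (q u + q v + q w) * (t' * z2 u + (1-t') * z2 v)) :
    ∃ q' : ι → ℝ, (∀ i, 0 ≤ q' i) ∧ (∑ i ∈ S.erase w, q' i = 1) ∧
      (∑ i ∈ S.erase w, q' i * z1 i ≤ ∑ i ∈ S, q i * z1 i) ∧
      (∑ i ∈ S, q i * z2 i ≤ ∑ i ∈ S.erase w, q' i * z2 i) := by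
  set lam := q u + q v + q w with hlam
  have hlam0 : 0 ≤ lam := by have := hq u; have := hq v; have := hq w; linarith
  have h1t : 0 ≤ 1 - t' := by linarith
  set q' : ι → ℝ := fun x => if x = u then lam*t' else if x = v then lam*(1-t') else if x = w then 0 else q x with hq'
  have hq'u : q' u = lam * t' := by simp [hq']
  have hq'v : q' v = lam * (1-t') := by simp [hq', huv.symm]
  have htail : ∀ f : ι → ℝ, ∑ x ∈ (((S.erase w).erase u).erase v), q' x * f x
      = ∑ x ∈ (((S.erase w).erase u).erase v), q x * f x := by
    intro f
    apply Finset.sum_congr rfl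
    intro x hx
    have hxv : x ≠ v := (Finset.mem_erase.mp hx).1
    have hxu : x ≠ u := (Finset.mem_erase.mp (Finset.mem_erase.mp hx).2).1
    have hxw : x ≠ w := (Finset.mem_erase.mp (Finset.mem_erase.mp (Finset.mem_erase.mp hx).2).2).1
    simp [hq', hxu, hxv, hxw]
  have htail1 : ∑ x ∈ (((S.erase w).erase u).erase v), q' x
      = ∑ x ∈ (((S.erase w).erase u).erase v), q x := by
    have := htail (fun _ => 1)
    simpa using this
  refine ⟨q', ?_, ?_, ?_, ?_⟩
  · intro i
    rw [hq']
    dsimp only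
    split_ifs
    · positivity
    · positivity
    · exact le_refl 0
    · exact hq i
  · rw [sum_two_erase q' S u v w hu hv huv huw hvw, htail1, hq'u, hq'v]
    rw [sum_three_erase q S u v w hu hv hw huv huw hvw] at hsum
    linarith
  · rw [sum_two_erase (fun x => q' x * z1 x) S u v w hu hv huv huw hvw, htail,
      sum_three_erase (fun x => q x * z1 x) S u v w hu hv hw huv huw hvw, hq'u, hq'v]
    nlinarith [h1]
  · rw [sum_two_erase (fun x => q' x * z2 x) S u v w hu hv huv huw hvw, htail,
      sum_three_erase (fun x => q x * z2 x) S u v w hu hv hw huv huw hvw, hq'u, hq'v]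
    nlinarith [h2]

end K

lemma two_point_dominate {ι : Type} [DecidableEq ι] (z1 z2 : ι → ℝ) (S : Finset ι) :
    ∀ q : ι → ℝ, (∀ i, 0 ≤ q i) → (∑ i ∈ S, q i = 1) →
    ∃ i ∈ S, ∃ j ∈ S, ∃ t, 0 ≤ t ∧ t ≤ 1 ∧
      t * z1 i + (1-t) * z1 j ≤ ∑ x ∈ S, q x * z1 x ∧
      ∑ x ∈ S, q x * z2 x ≤ t * z2 i + (1-t) * z2 j := by
  induction S using Finset.strongInductionOn with
  | _ S IH =>
  intro q hq hsum
  by_cases h3 : 3 ≤ S.card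
  · obtain ⟨T, hTS, hT3⟩ := Finset.exists_subset_card_eq h3
    obtain ⟨a, b, c, hab, hac, hbc, rfl⟩ := Finset.card_eq_three.mp hT3
    have haS : a ∈ S := hTS (by simp)
    have hbS : b ∈ S := hTS (by simp)
    have hcS : c ∈ S := hTS (by simp)
    have key : ∃ (u v w : ι), u ∈ S ∧ v ∈ S ∧ w ∈ S ∧ u ≠ v ∧ u ≠ w ∧ v ≠ w ∧
        ∃ t', 0 ≤ t' ∧ t' ≤ 1 ∧
        (q u + q v + q w) * (t' * z1 u + (1-t') * z1 v)
            ≤ q u * z1 u + q v * z1 v + q w * z1 w ∧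
        q u * z2 u + q v * z2 v + q w * z2 w
            ≤ (q u + q v + q w) * (t' * z2 u + (1-t') * z2 v) := by
      have hlam0 : 0 ≤ q a + q b + q c := by have := hq a; have := hq b; have := hq c; linarith
      rcases hlam0.eq_or_lt with hlam|hlam
      · -- all three weights are zero
        have ha0 : q a = 0 := by have := hq a; have := hq b; have := hq c; linarith
        have hb0 : q b = 0 := by have := hq a; have := hq b; have := hq c; linarith
        have hc0 : q c = 0 := by have := hq a; have := hq b; have := hq c; linarith
        refine ⟨a, b, c, haS, hbS, hcS, hab, hac, hbc, 1, by norm_num, by norm_num, ?_, ?_⟩ <;>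
          · rw [ha0, hb0, hc0]; norm_num
      · set lam := q a + q b + q c with hlamdef
        have hlamne : lam ≠ 0 := ne_of_gt hlam
        obtain ⟨t', ht0, ht1, hcase⟩ := tri (z1 a) (z2 a) (z1 b) (z2 b) (z1 c) (z2 c)
          (q a / lam) (q b / lam) (q c / lam)
          (q a / lam * z1 a + q b / lam * z1 b + q c / lam * z1 c)
          (q a / lam * z2 a + q b / lam * z2 b + q c / lam * z2 c)
          (div_nonneg (hq a) hlam.le) (div_nonneg (hq b) hlam.le) (div_nonneg (hq c) hlam.le)
          (by rw [← add_div, ← add_div, div_eq_one_iff_eq hlamne])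
          rfl rfl
        have hexp1 : lam * (q a / lam * z1 a + q b / lam * z1 b + q c / lam * z1 c)
            = q a * z1 a + q b * z1 b + q c * z1 c := by field_simp
        have hexp2 : lam * (q a / lam * z2 a + q b / lam * z2 b + q c / lam * z2 c)
            = q a * z2 a + q b * z2 b + q c * z2 c := by field_simp
        rcases hcase with ⟨e1, e2⟩|⟨e1, e2⟩|⟨e1, e2⟩
        · refine ⟨a, b, c, haS, hbS, hcS, hab, hac, hbc, t', ht0, ht1, ?_, ?_⟩
          · calc lam * (t' * z1 a + (1-t') * z1 b)
                ≤ lam * (q a / lam * z1 a + q b / lam * z1 b + q c / lam * z1 c) :=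
                  mul_le_mul_of_nonneg_left e1 hlam.le
              _ = _ := hexp1
          · calc q a * z2 a + q b * z2 b + q c * z2 c
                = lam * (q a / lam * z2 a + q b / lam * z2 b + q c / lam * z2 c) := hexp2.symm
              _ ≤ lam * (t' * z2 a + (1-t') * z2 b) := mul_le_mul_of_nonneg_left e2 hlam.le
        · refine ⟨a, c, b, haS, hcS, hbS, hac, hab, hbc.symm, t', ht0, ht1, ?_, ?_⟩
          · calc (q a + q c + q b) * (t' * z1 a + (1-t') * z1 c)
                ≤ (q a + q c + q b) * (q a / lam * z1 a + q b / lam * z1 b + q c / lam * z1 c) := by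
                  apply mul_le_mul_of_nonneg_left e1 (by linarith)
              _ = q a * z1 a + q c * z1 c + q b * z1 b := by
                  rw [show q a + q c + q b = lam by rw [hlamdef]; ring]
                  rw [hexp1]; ring
          · calc q a * z2 a + q c * z2 c + q b * z2 b
                = (q a + q c + q b) * (q a / lam * z2 a + q b / lam * z2 b + q c / lam * z2 c) := by
                  rw [show q a + q c + q b = lam by rw [hlamdef]; ring, hexp2]; ring
              _ ≤ (q a + q c + q b) * (t' * z2 a + (1-t') * z2 c) :=
                  mul_le_mul_of_nonneg_left e2 (by linarith)
        · refine ⟨b, c, a, hbS, hcS, haS, hbc, hab.symm, hac.symm, t', ht0, ht1, ?_, ?_⟩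
          · calc (q b + q c + q a) * (t' * z1 b + (1-t') * z1 c)
                ≤ (q b + q c + q a) * (q a / lam * z1 a + q b / lam * z1 b + q c / lam * z1 c) := by
                  apply mul_le_mul_of_nonneg_left e1 (by linarith)
              _ = q b * z1 b + q c * z1 c + q a * z1 a := by
                  rw [show q b + q c + q a = lam by rw [hlamdef]; ring, hexp1]; ring
          · calc q b * z2 b + q c * z2 c + q a * z2 a
                = (q b + q c + q a) * (q a / lam * z2 a + q b / lam * z2 b + q c / lam * z2 c) := by
                  rw [show q b + q c + q a = lam by rw [hlamdef]; ring, hexp2]; ring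
              _ ≤ (q b + q c + q a) * (t' * z2 b + (1-t') * z2 c) :=
                  mul_le_mul_of_nonneg_left e2 (by linarith)
    obtain ⟨u, v, w, hu, hv, hw, huv, huw, hvw, t', ht0, ht1, h1, h2⟩ := key
    obtain ⟨q', hq'0, hq'sum, hle1, hle2⟩ :=
      step_reduce z1 z2 q S hq hsum u v w hu hv hw huv huw hvw t' ht0 ht1 h1 h2
    obtain ⟨i, hi, j, hj, t, a1, a2, a3, a4⟩ := IH (S.erase w) (Finset.erase_ssubset hw) q' hq'0 hq'sum
    exact ⟨i, Finset.mem_of_mem_erase hi, j, Finset.mem_of_mem_erase hj, t, a1, a2,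
      le_trans a3 hle1, le_trans hle2 a4⟩
  · push_neg at h3
    have hc : S.card = 0 ∨ S.card = 1 ∨ S.card = 2 := by omega
    rcases hc with hc|hc|hc
    · exfalso
      rw [Finset.card_eq_zero.mp hc, Finset.sum_empty] at hsum
      norm_num at hsum
    · obtain ⟨i, rfl⟩ := Finset.card_eq_one.mp hc
      rw [Finset.sum_singleton] at hsum
      refine ⟨i, by simp, i, by simp, 1, by norm_num, by norm_num, ?_, ?_⟩ <;>
        · rw [Finset.sum_singleton, hsum]; norm_num
    · obtain ⟨i, j, hij, rfl⟩ := Finset.card_eq_two.mp hc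
      rw [Finset.sum_pair hij] at hsum
      refine ⟨i, by simp, j, by simp, q i, hq i, by linarith [hq j], ?_, ?_⟩ <;>
        · rw [Finset.sum_pair hij, show 1 - q i = q j by linarith]

noncomputable def hFun {A B : Type} [Fintype A] [Fintype B] (s : A → B → ℝ) : ℝ :=
  ent2 (fun a : A => ∑ b, s a b) + ent2 (fun b : B => ∑ a, s a b)
    - ent2 (fun ab : A × B => s ab.1 ab.2)

noncomputable def gFun {A B C : Type} [Fintype A] [Fintype B] [Fintype C]
    (N : A → B → C → ℝ) (s : A → B → ℝ) : ℝ :=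
  ent2 (fun ab : A × B => s ab.1 ab.2)
    + ent2 (fun y : C => ∑ ab : A × B, s ab.1 ab.2 * N ab.1 ab.2 y)
    - ent2 (fun aby : (A × B) × C => s aby.1.1 aby.1.2 * N aby.1.1 aby.1.2 aby.2)

lemma condMI_decomp {U A B : Type} [Fintype U] [Fintype A] [Fintype B]
    (p : U → A → B → ℝ) (q : U → ℝ) (s : U → A → B → ℝ)
    (hq : ∀ u, 0 ≤ q u) (hs0 : ∀ u a b, 0 ≤ s u a b)
    (hs1 : ∀ u, ∑ a, ∑ b, s u a b = 1)
    (hp : ∀ u a b, p u a b = q u * s u a b) :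
    condMI p = ∑ u, q u * hFun (s u) := by
  unfold condMI
  have e1 : ent2 (fun ua : U × A => ∑ b, p ua.1 ua.2 b)
      = ent2 q + ∑ u, q u * ent2 (fun a => ∑ b, s u a b) := by
    have hfe : (fun ua : U × A => ∑ b, p ua.1 ua.2 b)
        = (fun ua : U × A => q ua.1 * (fun u a => ∑ b, s u a b) ua.1 ua.2) := by
      funext ua
      simp only [hp]
      rw [← Finset.mul_sum]
    rw [hfe]
    exact ent2_mix q _ hq (fun u a => Finset.sum_nonneg (fun b _ => hs0 u a b)) hs1
  have e2 : ent2 (fun ub : U × B => ∑ a, p ub.1 a ub.2)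
      = ent2 q + ∑ u, q u * ent2 (fun b => ∑ a, s u a b) := by
    have hfe : (fun ub : U × B => ∑ a, p ub.1 a ub.2)
        = (fun ub : U × B => q ub.1 * (fun u b => ∑ a, s u a b) ub.1 ub.2) := by
      funext ub
      simp only [hp]
      rw [← Finset.mul_sum]
    rw [hfe]
    refine ent2_mix q _ hq (fun u b => Finset.sum_nonneg (fun a _ => hs0 u a b)) (fun u => ?_)
    rw [Finset.sum_comm]
    exact hs1 u
  have e3 : ent2 (fun uab : U × A × B => p uab.1 uab.2.1 uab.2.2)
      = ent2 q + ∑ u, q u * ent2 (fun ab : A × B => s u ab.1 ab.2) := by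
    have hfe : (fun uab : U × A × B => p uab.1 uab.2.1 uab.2.2)
        = (fun uab : U × (A × B) => q uab.1 * (fun (u : U) (ab : A × B) => s u ab.1 ab.2) uab.1 uab.2) := by
      funext uab
      simp only [hp]
    rw [hfe]
    refine ent2_mix q (fun (u : U) (ab : A × B) => s u ab.1 ab.2) hq (fun u ab => hs0 u ab.1 ab.2) (fun u => ?_)
    rw [Fintype.sum_prod_type]
    exact hs1 u
  have e4 : ent2 (fun u : U => ∑ a, ∑ b, p u a b) = ent2 q := by
    congr 1
    funext u
    simp only [hp]
    rw [show (∑ a, ∑ b, q u * s u a b) = q u * ∑ a, ∑ b, s u a b by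
      rw [Finset.mul_sum]; exact Finset.sum_congr rfl (fun a _ => by rw [Finset.mul_sum])]
    rw [hs1 u, mul_one]
  rw [e1, e2, e3, e4]
  have hsplit : ∑ u, q u * hFun (s u)
      = ∑ u, q u * ent2 (fun a => ∑ b, s u a b) + ∑ u, q u * ent2 (fun b => ∑ a, s u a b)
        - ∑ u, q u * ent2 (fun ab : A × B => s u ab.1 ab.2) := by
    rw [← Finset.sum_add_distrib, ← Finset.sum_sub_distrib]
    refine Finset.sum_congr rfl (fun u _ => ?_)
    unfold hFun
    ring
  rw [hsplit]
  ring

set_option maxHeartbeats 1000000 in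
lemma condMI_ext_decomp {U A B C : Type} [Fintype U] [Fintype A] [Fintype B] [Fintype C]
    (N : A → B → C → ℝ) (hN0 : ∀ a b c, 0 ≤ N a b c) (hN1 : ∀ a b, ∑ c, N a b c = 1)
    (p : U → A → B → ℝ) (q : U → ℝ) (s : U → A → B → ℝ)
    (hq : ∀ u, 0 ≤ q u) (hs0 : ∀ u a b, 0 ≤ s u a b)
    (hs1 : ∀ u, ∑ a, ∑ b, s u a b = 1)
    (hp : ∀ u a b, p u a b = q u * s u a b) :
    condMI (fun (u : U) (x : A × B) (y : C) => p u x.1 x.2 * N x.1 x.2 y)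
      = ∑ u, q u * gFun N (s u) := by
  unfold condMI
  have e1 : ent2 (fun ua : U × (A × B) => ∑ y, p ua.1 ua.2.1 ua.2.2 * N ua.2.1 ua.2.2 y)
      = ent2 q + ∑ u, q u * ent2 (fun ab : A × B => s u ab.1 ab.2) := by
    have hfe : (fun ua : U × (A × B) => ∑ y, p ua.1 ua.2.1 ua.2.2 * N ua.2.1 ua.2.2 y)
        = (fun ua : U × (A × B) => q ua.1 * (fun (u : U) (ab : A × B) => s u ab.1 ab.2) ua.1 ua.2) := by
      funext ua
      simp only [hp]
      rw [← Finset.mul_sum, hN1, mul_one]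
    rw [hfe]
    refine ent2_mix q (fun (u : U) (ab : A × B) => s u ab.1 ab.2) hq
      (fun u ab => hs0 u ab.1 ab.2) (fun u => ?_)
    rw [Fintype.sum_prod_type]
    exact hs1 u
  have e2 : ent2 (fun uy : U × C => ∑ ab : A × B, p uy.1 ab.1 ab.2 * N ab.1 ab.2 uy.2)
      = ent2 q + ∑ u, q u * ent2 (fun y : C => ∑ ab : A × B, s u ab.1 ab.2 * N ab.1 ab.2 y) := by
    have hfe : (fun uy : U × C => ∑ ab : A × B, p uy.1 ab.1 ab.2 * N ab.1 ab.2 uy.2)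
        = (fun uy : U × C => q uy.1 *
            (fun (u : U) (y : C) => ∑ ab : A × B, s u ab.1 ab.2 * N ab.1 ab.2 y) uy.1 uy.2) := by
      funext uy
      simp only [hp]
      rw [Finset.mul_sum]
      exact Finset.sum_congr rfl (fun ab _ => by ring)
    rw [hfe]
    refine ent2_mix q (fun (u : U) (y : C) => ∑ ab : A × B, s u ab.1 ab.2 * N ab.1 ab.2 y) hq
      (fun u y => Finset.sum_nonneg (fun ab _ => mul_nonneg (hs0 u ab.1 ab.2) (hN0 ab.1 ab.2 y)))
      (fun u => ?_)
    rw [Finset.sum_comm]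
    have : ∀ ab : A × B, ∑ y : C, s u ab.1 ab.2 * N ab.1 ab.2 y = s u ab.1 ab.2 := by
      intro ab
      rw [← Finset.mul_sum, hN1, mul_one]
    rw [Finset.sum_congr rfl (fun ab _ => this ab), Fintype.sum_prod_type]
    exact hs1 u
  have e3 : ent2 (fun uxy : U × (A × B) × C => p uxy.1 uxy.2.1.1 uxy.2.1.2 * N uxy.2.1.1 uxy.2.1.2 uxy.2.2)
      = ent2 q + ∑ u, q u * ent2 (fun aby : (A × B) × C =>
          s u aby.1.1 aby.1.2 * N aby.1.1 aby.1.2 aby.2) := by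
    have hfe : (fun uxy : U × (A × B) × C => p uxy.1 uxy.2.1.1 uxy.2.1.2 * N uxy.2.1.1 uxy.2.1.2 uxy.2.2)
        = (fun uxy : U × ((A × B) × C) => q uxy.1 *
            (fun (u : U) (aby : (A × B) × C) => s u aby.1.1 aby.1.2 * N aby.1.1 aby.1.2 aby.2) uxy.1 uxy.2) := by
      funext uxy
      simp only [hp]
      ring
    rw [hfe]
    refine ent2_mix q (fun (u : U) (aby : (A × B) × C) => s u aby.1.1 aby.1.2 * N aby.1.1 aby.1.2 aby.2) hq
      (fun u aby => mul_nonneg (hs0 u aby.1.1 aby.1.2) (hN0 _ _ _)) (fun u => ?_)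
    rw [Fintype.sum_prod_type]
    have : ∀ ab : A × B, ∑ y : C, s u ab.1 ab.2 * N ab.1 ab.2 y = s u ab.1 ab.2 := by
      intro ab
      rw [← Finset.mul_sum, hN1, mul_one]
    rw [Finset.sum_congr rfl (fun ab _ => this ab), Fintype.sum_prod_type]
    exact hs1 u
  have e4 : ent2 (fun u : U => ∑ ab : A × B, ∑ y, p u ab.1 ab.2 * N ab.1 ab.2 y) = ent2 q := by
    congr 1
    funext u
    have : ∀ ab : A × B, ∑ y : C, p u ab.1 ab.2 * N ab.1 ab.2 y = q u * s u ab.1 ab.2 := by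
      intro ab
      rw [← Finset.mul_sum, hN1, mul_one, hp]
    rw [Finset.sum_congr rfl (fun ab _ => this ab), ← Finset.mul_sum, Fintype.sum_prod_type, hs1, mul_one]
  rw [e1, e2, e3, e4]
  have hsplit : ∑ u, q u * gFun N (s u)
      = ∑ u, q u * ent2 (fun ab : A × B => s u ab.1 ab.2)
        + ∑ u, q u * ent2 (fun y : C => ∑ ab : A × B, s u ab.1 ab.2 * N ab.1 ab.2 y)
        - ∑ u, q u * ent2 (fun aby : (A × B) × C => s u aby.1.1 aby.1.2 * N aby.1.1 aby.1.2 aby.2) := by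
    rw [← Finset.sum_add_distrib, ← Finset.sum_sub_distrib]
    refine Finset.sum_congr rfl (fun u _ => ?_)
    unfold gFun
    ring
  rw [hsplit]
  ring

lemma gFun_le {A B C : Type} [Fintype A] [Fintype B] [Fintype C]
    (N : A → B → C → ℝ) (hN0 : ∀ a b c, 0 ≤ N a b c) (hN1 : ∀ a b, ∑ c, N a b c = 1)
    (s : A → B → ℝ) (hs0 : ∀ a b, 0 ≤ s a b) (hs1 : ∑ a, ∑ b, s a b = 1) :
    gFun N s ≤ Real.logb 2 (Fintype.card C) := by
  unfold gFun
  have hflat : ∑ ab : A × B, s ab.1 ab.2 = 1 := by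
    rw [Fintype.sum_prod_type]; exact hs1
  have hjoint : ent2 (fun aby : (A × B) × C => s aby.1.1 aby.1.2 * N aby.1.1 aby.1.2 aby.2)
      = ent2 (fun ab : A × B => s ab.1 ab.2)
        + ∑ ab : A × B, s ab.1 ab.2 * ent2 (fun y => N ab.1 ab.2 y) := by
    exact ent2_mix (fun ab : A × B => s ab.1 ab.2) (fun (ab : A × B) (y : C) => N ab.1 ab.2 y)
      (fun ab => hs0 ab.1 ab.2) (fun ab y => hN0 ab.1 ab.2 y) (fun ab => hN1 ab.1 ab.2)
  have hpos : 0 ≤ ∑ ab : A × B, s ab.1 ab.2 * ent2 (fun y => N ab.1 ab.2 y) :=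
    Finset.sum_nonneg (fun ab _ => mul_nonneg (hs0 ab.1 ab.2)
      (ent2_nonneg _ (fun y => hN0 ab.1 ab.2 y) (hN1 ab.1 ab.2)))
  have hY : ent2 (fun y : C => ∑ ab : A × B, s ab.1 ab.2 * N ab.1 ab.2 y)
      ≤ Real.logb 2 (Fintype.card C) := by
    refine ent2_le_card _ (fun y => Finset.sum_nonneg
      (fun ab _ => mul_nonneg (hs0 ab.1 ab.2) (hN0 ab.1 ab.2 y))) ?_
    rw [Finset.sum_comm]
    have : ∀ ab : A × B, ∑ y : C, s ab.1 ab.2 * N ab.1 ab.2 y = s ab.1 ab.2 := by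
      intro ab
      rw [← Finset.mul_sum, hN1, mul_one]
    rw [Finset.sum_congr rfl (fun ab _ => this ab)]
    exact hflat
  linarith [hjoint, hpos, hY]

-- channel facts
lemma chan_nonneg {X1 X2 Y : Type} [Fintype X1] [Fintype X2] [Fintype Y] (M : MAC X1 X2 Y) :
    ∀ (a : Fin 1 → X1) (b : Fin 1 → X2) (y : Fin 1 → Y),
      0 ≤ ∏ t, M.W (a t) (b t) (y t) :=
  fun a b y => Finset.prod_nonneg (fun t _ => M.nonneg (a t) (b t) (y t))

lemma chan_sum_one {X1 X2 Y : Type} [Fintype X1] [Fintype X2] [Fintype Y] (M : MAC X1 X2 Y) :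
    ∀ (a : Fin 1 → X1) (b : Fin 1 → X2),
      ∑ y : Fin 1 → Y, ∏ t, M.W (a t) (b t) (y t) = 1 := by
  intro a b
  have h1 : ∀ y : Fin 1 → Y, ∏ t, M.W (a t) (b t) (y t) = M.W (a 0) (b 0) (y 0) := by
    intro y
    rw [Fin.prod_univ_one]
  rw [Finset.sum_congr rfl (fun y _ => h1 y)]
  exact (Fintype.sum_equiv (Equiv.funUnique (Fin 1) Y) _ (fun y => M.W (a 0) (b 0) y)
    (fun y => rfl)).trans (M.sum_one (a 0) (b 0))

/-- decomposition of a joint pmf into marginal and conditionals -/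
lemma main_decomp {X1 X2 Y : Type} [Fintype X1] [Fintype X2] [Fintype Y] (M : MAC X1 X2 Y)
    {k : ℕ} (p : Fin k → (Fin 1 → X1) → (Fin 1 → X2) → ℝ) (hpmf : IsPMF3 p) :
    ∃ (q : Fin k → ℝ) (s : Fin k → (Fin 1 → X1) → (Fin 1 → X2) → ℝ),
      (∀ u, 0 ≤ q u) ∧ (∑ u, q u = 1) ∧
      (∀ u a b, 0 ≤ s u a b) ∧ (∀ u, ∑ a, ∑ b, s u a b = 1) ∧
      condMI p = ∑ u, q u * hFun (s u) ∧
      condMI (fun (u : Fin k) (x : (Fin 1 → X1) × (Fin 1 → X2)) (y : Fin 1 → Y) =>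
          p u x.1 x.2 * ∏ t, M.W (x.1 t) (x.2 t) (y t))
        = ∑ u, q u * gFun (fun (a : Fin 1 → X1) (b : Fin 1 → X2) (y : Fin 1 → Y) =>
            ∏ t, M.W (a t) (b t) (y t)) (s u) := by
  classical
  obtain ⟨hp0, hp1⟩ := hpmf
  have hA : Nonempty (Fin 1 → X1) := by
    rcases isEmpty_or_nonempty (Fin 1 → X1) with h|h
    · rw [Finset.sum_congr rfl (fun u _ => by rw [Finset.univ_eq_empty, Finset.sum_empty]),
        Finset.sum_const, smul_zero] at hp1
      norm_num at hp1
    · exact h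
  have hB : Nonempty (Fin 1 → X2) := by
    rcases isEmpty_or_nonempty (Fin 1 → X2) with h|h
    · rw [Finset.sum_congr rfl (fun u _ => Finset.sum_congr rfl
        (fun a _ => by rw [Finset.univ_eq_empty, Finset.sum_empty]))] at hp1
      simp at hp1
    · exact h
  set a₀ : Fin 1 → X1 := Classical.arbitrary _ with ha₀
  set b₀ : Fin 1 → X2 := Classical.arbitrary _ with hb₀
  set s₀ : (Fin 1 → X1) → (Fin 1 → X2) → ℝ :=
    fun a b => if a = a₀ then (if b = b₀ then 1 else 0) else 0 with hs₀
  have hs₀0 : ∀ a b, 0 ≤ s₀ a b := by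
    intro a b
    rw [hs₀]
    dsimp only
    split_ifs <;> norm_num
  have hs₀1 : ∑ a, ∑ b, s₀ a b = 1 := by
    rw [hs₀]
    simp
  set q : Fin k → ℝ := fun u => ∑ a, ∑ b, p u a b with hqdef
  have hq0 : ∀ u, 0 ≤ q u :=
    fun u => Finset.sum_nonneg (fun a _ => Finset.sum_nonneg (fun b _ => hp0 u a b))
  have hqsum : ∑ u, q u = 1 := hp1
  set s : Fin k → (Fin 1 → X1) → (Fin 1 → X2) → ℝ :=
    fun u => if q u = 0 then s₀ else fun a b => p u a b / q u with hsdef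
  have hs0 : ∀ u a b, 0 ≤ s u a b := by
    intro u a b
    rw [hsdef]
    dsimp only
    split_ifs with h
    · exact hs₀0 a b
    · exact div_nonneg (hp0 u a b) (hq0 u)
  have hs1 : ∀ u, ∑ a, ∑ b, s u a b = 1 := by
    intro u
    rw [hsdef]
    dsimp only
    split_ifs with h
    · exact hs₀1
    · have e : ∑ a, ∑ b, p u a b / q u = (∑ a, ∑ b, p u a b) / q u := by
        rw [Finset.sum_div]
        exact Finset.sum_congr rfl (fun a _ => by rw [Finset.sum_div])
      rw [e]
      exact div_self h
  have hp' : ∀ u a b, p u a b = q u * s u a b := by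
    intro u a b
    rw [hsdef]
    dsimp only
    split_ifs with h
    · have h2 : ∑ b', p u a b' = 0 := by
        have := (Finset.sum_eq_zero_iff_of_nonneg
          (fun a' (_ : a' ∈ Finset.univ) => Finset.sum_nonneg
            (fun b' _ => hp0 u a' b'))).mp h a (Finset.mem_univ a)
        exact this
      have h3 : p u a b = 0 :=
        (Finset.sum_eq_zero_iff_of_nonneg
          (fun b' (_ : b' ∈ Finset.univ) => hp0 u a b')).mp h2 b (Finset.mem_univ b)
      rw [h3, h, zero_mul]
    · rw [mul_div_cancel₀ _ h]
  exact ⟨q, s, hq0, hqsum, hs0, hs1,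
    condMI_decomp p q s hq0 hs0 hs1 hp',
    condMI_ext_decomp _ (chan_nonneg M) (chan_sum_one M) p q s hq0 hs0 hs1 hp'⟩

end AuxProofs

/-- **Cardinality bound.** In the definition of `σ₁(δ)`, the supremum may be
restricted to auxiliary alphabets `𝒰` with `|𝒰| ≤ 2` without changing its value. -/
theorem sigmaOne_cardinality_two
    {X1 X2 Y : Type} [Fintype X1] [Fintype X2] [Fintype Y]
    (M : MAC X1 X2 Y) (δ : ℝ) (hδ : 0 ≤ δ) :
    sigmaN M 1 δ =
      sSup {r | ∃ (k : ℕ), k ≤ 2 ∧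
        ∃ p : Fin k → (Fin 1 → X1) → (Fin 1 → X2) → ℝ,
          IsPMF3 p ∧ condMI p ≤ (1 : ℝ) * δ ∧
          r = (1 / (1 : ℝ)) *
            condMI (fun (u : Fin k) (x : (Fin 1 → X1) × (Fin 1 → X2)) (y : Fin 1 → Y) =>
              p u x.1 x.2 * ∏ t, M.W (x.1 t) (x.2 t) (y t))} := by
  classical
  set L := sigmaSet M 1 δ with hLdef
  set R : Set ℝ := {r | ∃ (k : ℕ), k ≤ 2 ∧
        ∃ p : Fin k → (Fin 1 → X1) → (Fin 1 → X2) → ℝ,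
          IsPMF3 p ∧ condMI p ≤ (1 : ℝ) * δ ∧
          r = (1 / (1 : ℝ)) *
            condMI (fun (u : Fin k) (x : (Fin 1 → X1) × (Fin 1 → X2)) (y : Fin 1 → Y) =>
              p u x.1 x.2 * ∏ t, M.W (x.1 t) (x.2 t) (y t))} with hRdef
  show sSup L = sSup R
  have hsub : R ⊆ L := by
    rintro r ⟨k, hk, p, h1, h2, h3⟩
    refine ⟨k, p, h1, ?_, ?_⟩
    · rw [Nat.cast_one]; exact h2
    · rw [h3, Nat.cast_one]
  have hbound : ∀ r ∈ L, r ≤ Real.logb 2 (Fintype.card (Fin 1 → Y)) := by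
    rintro r ⟨k, p, hpmf, hcon, rfl⟩
    obtain ⟨q, s, hq0, hqsum, hs0, hs1, hd1, hd2⟩ := main_decomp M p hpmf
    rw [hd2, Nat.cast_one]
    have hle : ∑ u, q u * gFun (fun (a : Fin 1 → X1) (b : Fin 1 → X2) (y : Fin 1 → Y) =>
          ∏ t, M.W (a t) (b t) (y t)) (s u)
        ≤ ∑ u, q u * Real.logb 2 (Fintype.card (Fin 1 → Y)) :=
      Finset.sum_le_sum (fun u _ => mul_le_mul_of_nonneg_left
        (gFun_le _ (chan_nonneg M) (chan_sum_one M) (s u) (hs0 u) (hs1 u)) (hq0 u))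
    rw [← Finset.sum_mul, hqsum, one_mul] at hle
    linarith
  have hkey : ∀ r ∈ L, ∃ r' ∈ R, r ≤ r' := by
    rintro r ⟨k, p, hpmf, hcon, rfl⟩
    obtain ⟨q, s, hq0, hqsum, hs0, hs1, hd1, hd2⟩ := main_decomp M p hpmf
    obtain ⟨i, -, j, -, t, ht0, ht1, hc1, hc2⟩ := two_point_dominate
      (fun u => hFun (s u))
      (fun u => gFun (fun (a : Fin 1 → X1) (b : Fin 1 → X2) (y : Fin 1 → Y) =>
        ∏ t, M.W (a t) (b t) (y t)) (s u)) Finset.univ q hq0 hqsum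
    set p2 : Fin 2 → (Fin 1 → X1) → (Fin 1 → X2) → ℝ :=
      fun u a b => if u = 0 then t * s i a b else (1-t) * s j a b with hp2def
    set q2 : Fin 2 → ℝ := fun u => if u = 0 then t else 1-t with hq2def
    set s2 : Fin 2 → (Fin 1 → X1) → (Fin 1 → X2) → ℝ :=
      fun u => if u = 0 then s i else s j with hs2def
    have hq20 : ∀ u, 0 ≤ q2 u := by
      intro u
      rw [hq2def]
      dsimp only
      split_ifs
      · exact ht0
      · linarith
    have hs20 : ∀ u a b, 0 ≤ s2 u a b := by
      intro u a b
      rw [hs2def]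
      dsimp only
      split_ifs
      · exact hs0 i a b
      · exact hs0 j a b
    have hs21 : ∀ u, ∑ a, ∑ b, s2 u a b = 1 := by
      intro u
      rw [hs2def]
      dsimp only
      split_ifs
      · exact hs1 i
      · exact hs1 j
    have hp2' : ∀ u a b, p2 u a b = q2 u * s2 u a b := by
      intro u a b
      rw [hp2def, hq2def, hs2def]
      dsimp only
      split_ifs <;> rfl
    have hsum2 : ∀ u, ∑ a, ∑ b, p2 u a b = q2 u := by
      intro u
      rw [Finset.sum_congr rfl (fun a _ => Finset.sum_congr rfl (fun b _ => hp2' u a b))]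
      rw [show (∑ a, ∑ b, q2 u * s2 u a b) = q2 u * ∑ a, ∑ b, s2 u a b from by
        rw [Finset.mul_sum]; exact Finset.sum_congr rfl (fun a _ => by rw [Finset.mul_sum])]
      rw [hs21 u, mul_one]
    have hpmf2 : IsPMF3 p2 := by
      constructor
      · intro u a b
        rw [hp2' u a b]
        exact mul_nonneg (hq20 u) (hs20 u a b)
      · rw [Finset.sum_congr rfl (fun u _ => hsum2 u), Fin.sum_univ_two]
        simp [hq2def]
    have hd1' : condMI p2 = t * hFun (s i) + (1-t) * hFun (s j) := by
      rw [condMI_decomp p2 q2 s2 hq20 hs20 hs21 hp2', Fin.sum_univ_two]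
      simp [hq2def, hs2def]
    have hd2' : condMI (fun (u : Fin 2) (x : (Fin 1 → X1) × (Fin 1 → X2)) (y : Fin 1 → Y) =>
          p2 u x.1 x.2 * ∏ t, M.W (x.1 t) (x.2 t) (y t))
        = t * gFun (fun (a : Fin 1 → X1) (b : Fin 1 → X2) (y : Fin 1 → Y) =>
            ∏ t, M.W (a t) (b t) (y t)) (s i)
          + (1-t) * gFun (fun (a : Fin 1 → X1) (b : Fin 1 → X2) (y : Fin 1 → Y) =>
            ∏ t, M.W (a t) (b t) (y t)) (s j) := by
      rw [condMI_ext_decomp _ (chan_nonneg M) (chan_sum_one M) p2 q2 s2 hq20 hs20 hs21 hp2',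
        Fin.sum_univ_two]
      simp [hq2def, hs2def]
    refine ⟨(1 / (1 : ℝ)) *
        condMI (fun (u : Fin 2) (x : (Fin 1 → X1) × (Fin 1 → X2)) (y : Fin 1 → Y) =>
          p2 u x.1 x.2 * ∏ t, M.W (x.1 t) (x.2 t) (y t)),
      ⟨2, le_refl 2, p2, hpmf2, ?_, rfl⟩, ?_⟩
    · rw [hd1']
      rw [Nat.cast_one] at hcon
      rw [hd1] at hcon
      linarith
    · rw [hd2, hd2', Nat.cast_one, show (1:ℝ)/1 = 1 from by norm_num, one_mul, one_mul]
      exact hc2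
  rcases Set.eq_empty_or_nonempty L with hLe|hLne
  · have hRe : R = ∅ := by
      rw [hLe] at hsub
      exact Set.subset_empty_iff.mp hsub
    rw [hLe, hRe]
  · have hbddL : BddAbove L := ⟨_, fun r hr => hbound r hr⟩
    have hRne : R.Nonempty := by
      obtain ⟨r, hr⟩ := hLne
      obtain ⟨r', hr', _⟩ := hkey r hr
      exact ⟨r', hr'⟩
    apply le_antisymm
    · apply csSup_le hLne
      intro r hr
      obtain ⟨r', hr', hle⟩ := hkey r hr
      exact hle.trans (le_csSup (hbddL.mono hsub) hr')
    · exact csSup_le_csSup hbddL hRne hsub
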